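/- If a and b are integers coprime to m with a ≡ b (mod m²), then C_m(a) ≡ C_m(b) (mod m), where C_m(x) = (x^λ(m) - 1)/m and λ is the Carmichael function. -/

import Mathlib

/-- The Carmichael function: the exponent of the multiplicative group mod `m`. -/
noncomputable def carmichael (m : ℕ) : ℕ := Monoid.exponent (ZMod m)ˣ

/-- The radical of `m`: the product of the distinct primes dividing `m`. -/
def radN (m : ℕ) : ℕ := ∏ p ∈ m.primeFactors, p

/-- `δ(m) = 2` if `4 ∣ m`, else `1`. -/
def deltaN (m : ℕ) : ℕ := if 4 ∣ m then 2 else 1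

/-- `d(m) = gcd(m, δ(m)·φ(rad m))`. -/
def dFun (m : ℕ) : ℕ := Nat.gcd m (deltaN m * Nat.totient (radN m))

/-- `f(m) = gcd(m, δ(m)·λ(m)·φ(rad m)/φ(m))`. -/
noncomputable def fFun (m : ℕ) : ℕ :=
  Nat.gcd m (deltaN m * carmichael m * Nat.totient (radN m) / Nat.totient m)

theorem carmichael_quotient_congr (m : ℕ) (hm : 1 ≤ m) (a b : ℤ)
    (ha : IsCoprime a (m : ℤ)) (hb : IsCoprime b (m : ℤ))
    (hab : a ≡ b [ZMOD ((m : ℤ) ^ 2)]) :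
    (a ^ carmichael m - 1) / m ≡ (b ^ carmichael m - 1) / m [ZMOD (m : ℤ)] := by
  have hm0 : (m : ℤ) ≠ 0 := by positivity
  set n := carmichael m with hn
  have hdvd : ∀ c : ℤ, IsCoprime c (m : ℤ) → (m : ℤ) ∣ c ^ n - 1 := by
    intro c hc
    obtain ⟨u, v, huv⟩ := hc
    have hu : IsUnit ((c : ZMod m)) := by
      refine IsUnit.of_mul_eq_one (u : ZMod m) ?_
      have : ((u * c + v * m : ℤ) : ZMod m) = 1 := by rw [huv]; simp
      push_cast at this
      simp only [ZMod.natCast_self, mul_zero, add_zero] at this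
      rw [mul_comm]; exact this
    have hpow : (hu.unit : (ZMod m)ˣ) ^ n = 1 := Monoid.pow_exponent_eq_one _
    have hpow' : ((c : ZMod m)) ^ n = 1 := by
      have := congrArg (Units.val) hpow
      simpa using this
    have : ((c ^ n - 1 : ℤ) : ZMod m) = 0 := by push_cast [hpow']; ring
    exact (ZMod.intCast_zmod_eq_zero_iff_dvd _ _).mp this
  obtain ⟨x, hx⟩ := hdvd a ha
  obtain ⟨y, hy⟩ := hdvd b hb
  have hpow : a ^ n ≡ b ^ n [ZMOD ((m : ℤ) ^ 2)] := hab.pow n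
  have hd2 : (m : ℤ) ^ 2 ∣ (b ^ n - 1) - (a ^ n - 1) := by
    have := (Int.ModEq.dvd hpow)
    simpa [sub_sub_sub_cancel_right] using this
  rw [hx, hy] at hd2 ⊢
  rw [Int.mul_ediv_cancel_left _ hm0, Int.mul_ediv_cancel_left _ hm0]
  have : (m : ℤ) ∣ y - x := by
    rcases hd2 with ⟨k, hk⟩
    refine ⟨k, ?_⟩
    have : (m : ℤ) * (y - x) = (m : ℤ) * ((m : ℤ) * k) := by ring_nf; ring_nf at hk; linarith
    exact mul_left_cancel₀ hm0 this
  exact (Int.modEq_iff_dvd.mpr this)
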